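/- In the random string model over a 4-letter alphabet with uniform i.i.d. symbols, for any integer a > 0, P_1(k+a, p+a) ≤ 2·P_1(k,p) + (p+2)/4^p, where P_1(k,p) is the probability that in a uniform random string of length k+1 the first or last p-substring is the unique minimum p-substring. -/

import Mathlib

open scoped Classical

def substr {α : Type*} (s : List α) (i len : ℕ) : List α := (s.drop i).take len

def uniqueMinAt {α : Type*} [LinearOrder α] (s : List α) (p i : ℕ) : Prop :=
  i + p ≤ s.length ∧ ∀ j, j + p ≤ s.length → j ≠ i → substr s i p < substr s j p

/-- `P₁(k,p)`: probability that, for a string drawn uniformly from `{0,1,2,3}^{k+1}`,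
the first or the last `p`-substring is the unique minimum `p`-substring. -/
noncomputable def P1 (k p : ℕ) : ℚ :=
  ((Finset.univ.filter fun s : Fin (k + 1) → Fin 4 =>
    uniqueMinAt (List.ofFn s) p 0 ∨ uniqueMinAt (List.ofFn s) p (k + 1 - p)).card : ℚ)
    / 4 ^ (k + 1)

open Finset


def Nv (p : ℕ) (f : ℕ → Fin 4) (i : ℕ) : ℕ :=
  ∑ t ∈ Finset.range p, (f (i + t)).val * 4 ^ (p - 1 - t)

lemma Nv_succ (p : ℕ) (f : ℕ → Fin 4) (i : ℕ) :
    Nv (p+1) f i = (f i).val * 4 ^ p + Nv p f (i+1) := by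
  unfold Nv
  rw [Finset.sum_range_succ']
  simp only [Nat.add_sub_cancel, Nat.sub_zero, add_zero]
  rw [add_comm]
  congr 1
  apply Finset.sum_congr rfl
  intro t ht
  have h1 : i + (t + 1) = i + 1 + t := by omega
  have h2 : p - (t + 1) = p - 1 - t := by omega
  rw [h1, h2]

lemma Nv_congr {p : ℕ} {f g : ℕ → Fin 4} {i j : ℕ}
    (h : ∀ t < p, f (i + t) = g (j + t)) : Nv p f i = Nv p g j := by
  unfold Nv
  exact Finset.sum_congr rfl fun t ht => by rw [h t (Finset.mem_range.mp ht)]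

lemma Nv_lt (p : ℕ) (f : ℕ → Fin 4) (i : ℕ) : Nv p f i < 4 ^ p := by
  induction p generalizing i with
  | zero => simp [Nv]
  | succ p ih =>
    rw [Nv_succ]
    have h1 := ih (i+1)
    have hv : (f i).val ≤ 3 := by omega
    have h2 : (f i).val * 4 ^ p ≤ 3 * 4 ^ p := Nat.mul_le_mul_right _ hv
    have h3 : (3:ℕ) * 4^p + 4^p = 4^(p+1) := by ring
    omega

lemma block_lt {a b A B F : ℕ} (hA : A < F) (h : a < b) : a * F + A < b * F + B :=
  calc a * F + A < a * F + F := by omega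
  _ = (a+1) * F := by ring
  _ ≤ b * F := Nat.mul_le_mul_right _ h
  _ ≤ b * F + B := Nat.le_add_right _ _

lemma Nv_split (p q : ℕ) (f : ℕ → Fin 4) (i : ℕ) :
    Nv (p + q) f i = Nv p f i * 4 ^ q + Nv q f (i + p) := by
  induction p generalizing i with
  | zero => simp [Nv]
  | succ p ih =>
    have e : p + 1 + q = (p + q) + 1 := by omega
    rw [e, Nv_succ, ih (i+1), Nv_succ, show i + 1 + p = i + (p+1) by omega, pow_add]
    ring

lemma Nv_eq_pointwise {p : ℕ} {f g : ℕ → Fin 4} {i j : ℕ}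
    (h : Nv p f i = Nv p g j) : ∀ t < p, f (i + t) = g (j + t) := by
  induction p generalizing i j with
  | zero => omega
  | succ p ih =>
    rw [Nv_succ, Nv_succ] at h
    have h1 := Nv_lt p f (i+1)
    have h2 := Nv_lt p g (j+1)
    have hv : (f i).val = (g j).val := by
      rcases Nat.lt_trichotomy (f i).val (g j).val with hlt | heq | hgt
      · exact absurd h (Nat.ne_of_lt (block_lt h1 hlt))
      · exact heq
      · exact absurd h.symm (Nat.ne_of_lt (block_lt h2 hgt))
    have hfg : f i = g j := Fin.val_injective hv
    have htail : Nv p f (i+1) = Nv p g (j+1) := by rw [hv] at h; omega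
    intro t ht
    match t with
    | 0 => simpa using hfg
    | Nat.succ t =>
      have := ih htail t (by omega)
      rw [show i + (t+1) = i + 1 + t by omega, show j + (t+1) = j + 1 + t by omega]
      exact this

lemma Nv_succ_lt_iff {p : ℕ} {f g : ℕ → Fin 4} {i j : ℕ} :
    Nv (p+1) f i < Nv (p+1) g j ↔
      ((f i).val < (g j).val ∨ (f i = g j ∧ Nv p f (i+1) < Nv p g (j+1))) := by
  rw [Nv_succ, Nv_succ]
  have h1 := Nv_lt p f (i+1)
  have h2 := Nv_lt p g (j+1)
  constructor
  · intro h
    rcases Nat.lt_trichotomy (f i).val (g j).val with hlt | heq | hgt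
    · exact Or.inl hlt
    · refine Or.inr ⟨Fin.val_injective heq, ?_⟩
      rw [heq] at h; omega
    · exact absurd (block_lt (B := Nv p f (i+1)) h2 hgt) (by omega)
  · rintro (hlt | ⟨heq, hlt⟩)
    · exact block_lt h1 hlt
    · rw [heq]; omega

-- comparison prefix lemma
lemma Nv_prefix_le {d q : ℕ} {f g : ℕ → Fin 4} {i j : ℕ}
    (h : Nv (d + q) f i < Nv (d + q) g j) : Nv d f i ≤ Nv d g j := by
  rw [Nv_split, Nv_split] at h
  by_contra hc
  push_neg at hc
  exact absurd h (not_lt_of_ge (le_of_lt (block_lt (Nv_lt _ _ _) hc)))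

def extf {N : ℕ} [NeZero N] (s : Fin N → Fin 4) (t : ℕ) : Fin 4 :=
  s ⟨t % N, Nat.mod_lt _ (Nat.pos_of_ne_zero (NeZero.ne N))⟩

lemma extf_eq {N : ℕ} [NeZero N] (s : Fin N → Fin 4) {t : ℕ} (h : t < N) :
    extf s t = s ⟨t, h⟩ := by
  simp [extf, Nat.mod_eq_of_lt h]

def substr' {α : Type*} (s : List α) (i len : ℕ) : List α := (s.drop i).take len

lemma substr'_ofFn {N : ℕ} [NeZero N] (s : Fin N → Fin 4) (i p : ℕ) (h : i + p ≤ N) :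
    substr' (List.ofFn s) i p = List.ofFn (fun t : Fin p => extf s (i + t.val)) := by
  apply List.ext_getElem
  · simp [substr']; omega
  · intro n h1 h2
    simp only [substr', List.getElem_take, List.getElem_drop, List.getElem_ofFn]
    rw [extf_eq]

-- list lex bridge
lemma lt_bridge (p : ℕ) (f g : ℕ → Fin 4) (i j : ℕ) :
    (List.ofFn (fun t : Fin p => f (i + t.val)) < List.ofFn (fun t : Fin p => g (j + t.val)))
      ↔ Nv p f i < Nv p g j := by
  induction p generalizing i j with
  | zero =>
    simp only [List.ofFn_zero, Nv, Finset.range_zero, Finset.sum_empty, lt_self_iff_false,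
      iff_false]
  | succ p ih =>
    rw [List.ofFn_succ]
    have e1 : (fun t : Fin p => (fun t : Fin (p+1) => f (i + t.val)) t.succ)
        = fun t : Fin p => f ((i+1) + t.val) := by
      funext t; simp [Fin.val_succ]; congr 1; omega
    have e2 : (fun t : Fin p => (fun t : Fin (p+1) => g (j + t.val)) t.succ)
        = fun t : Fin p => g ((j+1) + t.val) := by
      funext t; simp [Fin.val_succ]; congr 1; omega
    rw [List.ofFn_succ (f := fun t : Fin (p+1) => g (j + t.val))]
    simp only [Fin.val_zero, add_zero]
    rw [e1, e2]
    have hcons : ∀ (a b : Fin 4) (l l' : List (Fin 4)),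
        (a :: l) < (b :: l') ↔ a < b ∨ (a = b ∧ l < l') := by
      intro a b l l'
      constructor
      · intro h
        cases h with
        | cons h => exact Or.inr ⟨rfl, h⟩
        | rel h => exact Or.inl h
      · rintro (h | ⟨rfl, h⟩)
        · exact List.Lex.rel h
        · exact List.Lex.cons h
    rw [hcons, ih, Nv_succ_lt_iff, Fin.lt_def]

/-! ### Patterns and the rotation-minimal set `Wset` -/

def extw {d : ℕ} (w : Fin d → Fin 4) (t : ℕ) : Fin 4 :=
  if h : t % d < d then w ⟨t % d, h⟩ else 0

lemma extw_eq' {d : ℕ} (w : Fin d → Fin 4) {t : ℕ} (h : t < d) : extw w t = w ⟨t, h⟩ := by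
  simp [extw, Nat.mod_eq_of_lt h, Nat.lt_of_lt_of_le h (le_refl d)]

lemma extw_idx_congr {d : ℕ} (w : Fin d → Fin 4) {x y : ℕ}
    (h : x % d = y % d) : extw w x = extw w y := by
  unfold extw; rw [h]

lemma mod_add_cong {d x y : ℕ} (h : x % d = y % d) (t : ℕ) : (x + t) % d = (y + t) % d := by
  rw [Nat.add_mod, h, ← Nat.add_mod]

lemma mod_add_cong' {d t t' : ℕ} (h : t % d = t' % d) (x : ℕ) : (x + t) % d = (x + t') % d := by
  rw [Nat.add_mod, h, ← Nat.add_mod]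

lemma extw_add_right {d : ℕ} (w : Fin d → Fin 4) (t : ℕ) :
    extw w (t + d) = extw w t :=
  extw_idx_congr w (Nat.add_mod_right t d)

lemma Nv_extw_shift {n d : ℕ} (w : Fin d → Fin 4) {x y : ℕ}
    (h : x % d = y % d) : Nv n (extw w) x = Nv n (extw w) y :=
  Nv_congr fun t _ => extw_idx_congr w (mod_add_cong h t)

lemma mod_self_mod {t d : ℕ} : (t % d) % d = t % d := Nat.mod_mod_of_dvd t (dvd_refl d)

noncomputable def Wset (p d : ℕ) : Finset (Fin d → Fin 4) :=
  Finset.univ.filter fun w => ∀ i, 0 < i → i < d → Nv p (extw w) 0 < Nv p (extw w) i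

lemma rotmin {p d : ℕ} (hd : 0 < d) (hdp : d < p) {w : Fin d → Fin 4}
    (hw : w ∈ Wset p d) : ∀ i, 0 < i → i < d → Nv d (extw w) 0 < Nv d (extw w) i := by
  simp only [Wset, Finset.mem_filter] at hw
  intro i hi0 hid
  have hstrict := hw.2 i hi0 hid
  have hple : Nv d (extw w) 0 ≤ Nv d (extw w) i := by
    have e : p = d + (p - d) := by omega
    rw [e] at hstrict
    exact Nv_prefix_le hstrict
  rcases lt_or_eq_of_le hple with h | h
  · exact h
  · exfalso
    have hpw := Nv_eq_pointwise h
    have hall : ∀ t : ℕ, extw w (0 + t) = extw w (i + t) := by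
      intro t
      calc extw w (0 + t) = extw w (0 + t % d) :=
            extw_idx_congr w (mod_add_cong' mod_self_mod.symm 0)
      _ = extw w (i + t % d) := hpw (t % d) (Nat.mod_lt _ hd)
      _ = extw w (i + t) := extw_idx_congr w (mod_add_cong' mod_self_mod i)
    exact absurd (Nv_congr (p := p) fun t _ => hall t) (by omega)

lemma Wset_card {p d : ℕ} (hd : 0 < d) (hdp : d < p) :
    (Wset p d).card * d ≤ 4 ^ d := by
  have h := Finset.card_le_card_of_injOn
    (f := fun wi : (Fin d → Fin 4) × Fin d => fun t : Fin d => extw wi.1 (wi.2.val + t.val))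
    (s := (Wset p d) ×ˢ Finset.univ) (t := Finset.univ) (fun _ _ => Finset.mem_univ _) ?_
  · calc (Wset p d).card * d = ((Wset p d) ×ˢ (Finset.univ : Finset (Fin d))).card := by
          rw [Finset.card_product, Finset.card_univ, Fintype.card_fin]
    _ ≤ (Finset.univ : Finset (Fin d → Fin 4)).card := h
    _ = 4 ^ d := by rw [Finset.card_univ]; simp
  · rintro ⟨w, i⟩ hwi ⟨w', i'⟩ hwi' heq
    simp only [Finset.coe_product, Set.mem_prod, Finset.mem_coe] at hwi hwi'
    have hw := hwi.1; have hw' := hwi'.1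
    have h8 : ∀ t : ℕ, extw w (i.val + t) = extw w' (i'.val + t) := by
      intro t
      calc extw w (i.val + t) = extw w (i.val + t % d) :=
            extw_idx_congr w (mod_add_cong' mod_self_mod.symm i.val)
      _ = extw w' (i'.val + t % d) := congrFun heq ⟨t % d, Nat.mod_lt _ hd⟩
      _ = extw w' (i'.val + t) := extw_idx_congr w' (mod_add_cong' mod_self_mod i'.val)
    have e1 : Nv d (extw w') 0 = Nv d (extw w) (i.val + (d - i'.val)) := by
      apply Nv_congr
      intro t ht
      calc extw w' (0 + t) = extw w' (i'.val + ((d - i'.val) + t)) := by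
            rw [show i'.val + ((d - i'.val) + t) = (0 + t) + d by omega, extw_add_right]
      _ = extw w (i.val + ((d - i'.val) + t)) := (h8 _).symm
      _ = extw w ((i.val + (d - i'.val)) + t) := by congr 1; omega
    have e2 : Nv d (extw w) 0 = Nv d (extw w') (i'.val + (d - i.val)) := by
      apply Nv_congr
      intro t ht
      calc extw w (0 + t) = extw w (i.val + ((d - i.val) + t)) := by
            rw [show i.val + ((d - i.val) + t) = (0 + t) + d by omega, extw_add_right]
      _ = extw w' (i'.val + ((d - i.val) + t)) := h8 _
      _ = extw w' ((i'.val + (d - i.val)) + t) := by congr 1; omega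
    set c := (i.val + (d - i'.val)) % d with hc
    set c' := (i'.val + (d - i.val)) % d with hc'
    have hcc : Nv d (extw w') 0 = Nv d (extw w) c := by
      rw [e1]; exact Nv_extw_shift w mod_self_mod.symm
    have hcc' : Nv d (extw w) 0 = Nv d (extw w') c' := by
      rw [e2]; exact Nv_extw_shift w' mod_self_mod.symm
    have hiv : i.val = i'.val := by
      by_contra hne
      -- both c and c' are nonzero
      have hv1 : 0 < i.val + (d - i'.val) ∧ i.val + (d - i'.val) < 2 * d := by
        have := i.isLt; have := i'.isLt; omega
      have hv2 : 0 < i'.val + (d - i.val) ∧ i'.val + (d - i.val) < 2 * d := by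
        have := i.isLt; have := i'.isLt; omega
      have hcne : c ≠ 0 := by
        intro h0
        have hdvd : d ∣ (i.val + (d - i'.val)) := Nat.dvd_of_mod_eq_zero (hc ▸ h0)
        rcases hdvd with ⟨e, he⟩
        match e, he with
        | 0, he => omega
        | 1, he => have := i.isLt; have := i'.isLt; omega
        | (n+2), he =>
          have : d * 2 ≤ d * (n + 2) := Nat.mul_le_mul_left d (by omega)
          omega
      have hcne' : c' ≠ 0 := by
        intro h0
        have hdvd : d ∣ (i'.val + (d - i.val)) := Nat.dvd_of_mod_eq_zero (hc' ▸ h0)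
        rcases hdvd with ⟨e, he⟩
        match e, he with
        | 0, he => omega
        | 1, he => have := i.isLt; have := i'.isLt; omega
        | (n+2), he =>
          have : d * 2 ≤ d * (n + 2) := Nat.mul_le_mul_left d (by omega)
          omega
      have l1 : Nv d (extw w) 0 < Nv d (extw w) c :=
        rotmin hd hdp hw c (Nat.pos_of_ne_zero hcne) (Nat.mod_lt _ hd)
      have l2 : Nv d (extw w') 0 < Nv d (extw w') c' :=
        rotmin hd hdp hw' c' (Nat.pos_of_ne_zero hcne') (Nat.mod_lt _ hd)
      omega
    have hweq : w = w' := by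
      funext t
      have h9 := h8 ((d - i.val) + t.val)
      rw [hiv] at h9
      rw [show i'.val + (d - i'.val + t.val) = t.val + d by have := i'.isLt; omega] at h9
      rw [extw_add_right, extw_add_right] at h9
      rw [extw_eq' w t.isLt, extw_eq' w' t.isLt] at h9
      simpa using h9
    exact Prod.ext hweq (Fin.ext hiv)

/-! ### Periodic tie sets -/

lemma per_extend {k p d : ℕ} (hd : 0 < d) (hdk : d + p ≤ k + 1) (s : Fin (k+1) → Fin 4)
    (hper : ∀ t < p, extf s t = extf s (d + t)) :
    ∀ r, r < d + p → extf s r = extw (fun i : Fin d => extf s i.val) r := by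
  intro r
  induction r using Nat.strong_induction_on with
  | _ r ih =>
    intro hr
    by_cases hcase : r < d
    · rw [extw_eq' _ hcase]
    · push_neg at hcase
      have h1 : extf s r = extf s (r - d) := by
        have := hper (r - d) (by omega)
        rw [show d + (r - d) = r by omega] at this
        exact this.symm
      rw [h1, ih (r - d) (by omega) (by omega)]
      exact extw_idx_congr _ (Nat.mod_eq_sub_mod hcase).symm

noncomputable def PerSet (k p d : ℕ) : Finset (Fin (k+1) → Fin 4) :=
  Finset.univ.filter fun s => d + p ≤ k + 1 ∧ (∀ t < p, extf s t = extf s (d + t)) ∧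
    (∀ i, 0 < i → i < d → Nv p (extf s) 0 < Nv p (extf s) i)

lemma PerSet_card {k p d : ℕ} (hd : 0 < d) (hdp : d < p) :
    (PerSet k p d).card ≤ (Wset p d).card * 4 ^ (k + 1 - p - d) := by
  have h := Finset.card_le_card_of_injOn
    (f := fun s : Fin (k+1) → Fin 4 =>
      ((fun i : Fin d => extf s i.val), (fun r : Fin (k+1-p-d) => extf s (d + p + r.val))))
    (s := PerSet k p d)
    (t := (Wset p d) ×ˢ (Finset.univ : Finset (Fin (k+1-p-d) → Fin 4))) ?_ ?_
  · calc (PerSet k p d).card ≤ _ := h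
    _ = (Wset p d).card * 4 ^ (k+1-p-d) := by
        rw [Finset.card_product, Finset.card_univ]
        congr 1
        simp
  · intro s hs
    simp only [PerSet, Finset.mem_coe, Finset.mem_filter] at hs
    obtain ⟨-, hdk, hper, hmin⟩ := hs
    rw [Finset.mem_coe, Finset.mem_product]
    refine ⟨?_, Finset.mem_univ _⟩
    simp only [Wset, Finset.mem_filter]
    refine ⟨Finset.mem_univ _, fun i hi0 hid => ?_⟩
    have key : ∀ i', i' ≤ d → Nv p (extf s) i' = Nv p (extw (fun i : Fin d => extf s i.val)) i' := by
      intro i' hi'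
      exact Nv_congr fun t ht => per_extend hd hdk s hper (i' + t) (by omega)
    rw [← key i (le_of_lt hid), ← key 0 (by omega)]
    exact hmin i hi0 hid
  · intro s hs s' hs' heq
    simp only [PerSet, Finset.mem_coe, Finset.mem_filter] at hs hs'
    obtain ⟨-, hdk, hper, -⟩ := hs
    obtain ⟨-, hdk', hper', -⟩ := hs'
    have hw := congrArg Prod.fst heq
    have hr := congrArg Prod.snd heq
    simp only at hw hr
    funext x
    by_cases hcase : x.val < d + p
    · have e1 := per_extend hd hdk s hper x.val hcase
      have e2 := per_extend hd hdk' s' hper' x.val hcase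
      rw [extf_eq s x.isLt] at e1
      rw [extf_eq s' x.isLt] at e2
      rw [show (⟨x.val, x.isLt⟩ : Fin (k+1)) = x from rfl] at e1 e2
      rw [e1, e2, hw]
    · push_neg at hcase
      have hx : x.val = d + p + (x.val - (d + p)) := by omega
      have hlt : x.val - (d + p) < k + 1 - p - d := by have := x.isLt; omega
      have := congrFun hr ⟨x.val - (d+p), hlt⟩
      simp only at this
      rw [← hx] at this
      rw [extf_eq s x.isLt, extf_eq s' x.isLt] at this
      exact this

lemma per_extend' {k p d : ℕ} (hd : 0 < d) (hdk : d + p ≤ k + 1) (s : Fin (k+1) → Fin 4)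
    (hper : ∀ t < p, extf s ((k+1-p-d) + t) = extf s ((k+1-p-d) + d + t)) :
    ∀ r, r < d + p →
      extf s ((k+1-p-d) + r) = extw (fun i : Fin d => extf s ((k+1-p-d) + i.val)) r := by
  intro r
  induction r using Nat.strong_induction_on with
  | _ r ih =>
    intro hr
    by_cases hcase : r < d
    · rw [extw_eq' _ hcase]
    · push_neg at hcase
      have h1 : extf s ((k+1-p-d) + r) = extf s ((k+1-p-d) + (r - d)) := by
        have := hper (r - d) (by omega)
        rw [show (k+1-p-d) + d + (r - d) = (k+1-p-d) + r by omega] at this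
        exact this.symm
      rw [h1, ih (r - d) (by omega) (by omega)]
      exact extw_idx_congr _ (Nat.mod_eq_sub_mod hcase).symm

noncomputable def PerSet' (k p d : ℕ) : Finset (Fin (k+1) → Fin 4) :=
  Finset.univ.filter fun s => d + p ≤ k + 1 ∧
    (∀ t < p, extf s ((k+1-p-d) + t) = extf s ((k+1-p-d) + d + t)) ∧
    (∀ i, 0 < i → i < d → Nv p (extf s) (k+1-p) < Nv p (extf s) ((k+1-p-d) + i))

lemma PerSet'_card {k p d : ℕ} (hd : 0 < d) (hdp : d < p) :
    (PerSet' k p d).card ≤ (Wset p d).card * 4 ^ (k + 1 - p - d) := by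
  have h := Finset.card_le_card_of_injOn
    (f := fun s : Fin (k+1) → Fin 4 =>
      ((fun i : Fin d => extf s ((k+1-p-d) + i.val)), (fun r : Fin (k+1-p-d) => extf s r.val)))
    (s := PerSet' k p d)
    (t := (Wset p d) ×ˢ (Finset.univ : Finset (Fin (k+1-p-d) → Fin 4))) ?_ ?_
  · calc (PerSet' k p d).card ≤ _ := h
    _ = (Wset p d).card * 4 ^ (k+1-p-d) := by
        rw [Finset.card_product, Finset.card_univ]
        congr 1
        simp
  · intro s hs
    simp only [PerSet', Finset.mem_coe, Finset.mem_filter] at hs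
    obtain ⟨-, hdk, hper, hmin⟩ := hs
    rw [Finset.mem_coe, Finset.mem_product]
    refine ⟨?_, Finset.mem_univ _⟩
    simp only [Wset, Finset.mem_filter]
    refine ⟨Finset.mem_univ _, fun i hi0 hid => ?_⟩
    have key : ∀ i', i' ≤ d → Nv p (extf s) ((k+1-p-d) + i')
        = Nv p (extw (fun i : Fin d => extf s ((k+1-p-d) + i.val))) i' := by
      intro i' hi'
      refine Nv_congr fun t ht => ?_
      rw [show (k+1-p-d) + i' + t = (k+1-p-d) + (i' + t) by omega]
      exact per_extend' hd hdk s hper (i' + t) (by omega)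
    have h0 := key d (le_refl d)
    have hi := key i (le_of_lt hid)
    have hmin' := hmin i hi0 hid
    rw [hi] at hmin'
    have hdd : Nv p (extf s) (k + 1 - p) = Nv p (extf s) ((k+1-p-d) + d) := by
      congr 1; omega
    rw [hdd, h0] at hmin'
    calc Nv p (extw _) 0 = Nv p (extw (fun i : Fin d => extf s ((k+1-p-d) + i.val))) d :=
          Nv_extw_shift _ (by simp [Nat.mod_self])
    _ < _ := hmin'
  · intro s hs s' hs' heq
    simp only [PerSet', Finset.mem_coe, Finset.mem_filter] at hs hs'
    obtain ⟨-, hdk, hper, -⟩ := hs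
    obtain ⟨-, hdk', hper', -⟩ := hs'
    have hw := congrArg Prod.fst heq
    have hr := congrArg Prod.snd heq
    simp only at hw hr
    funext x
    by_cases hcase : x.val < k + 1 - p - d
    · have := congrFun hr ⟨x.val, hcase⟩
      simp only at this
      rw [extf_eq s x.isLt, extf_eq s' x.isLt] at this
      exact this
    · push_neg at hcase
      have hx : x.val = (k+1-p-d) + (x.val - (k+1-p-d)) := by omega
      have hlt : x.val - (k+1-p-d) < d + p := by have := x.isLt; omega
      have e1 := per_extend' hd hdk s hper _ hlt
      have e2 := per_extend' hd hdk' s' hper' _ hlt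
      rw [← hx] at e1 e2
      rw [extf_eq s x.isLt] at e1
      rw [extf_eq s' x.isLt] at e2
      rw [show (⟨x.val, x.isLt⟩ : Fin (k+1)) = x from rfl] at e1 e2
      rw [e1, e2, hw]

/-! ### Distant tie sets -/

noncomputable def Aset (k p : ℕ) : Finset (Fin (k+1) → Fin 4) :=
  Finset.univ.filter fun s => ∃ j, p ≤ j ∧ j + p ≤ k+1 ∧
    (∀ t < p, extf s t = extf s (j + t)) ∧
    (∀ i, p ≤ i → i < j → Nv p (extf s) j < Nv p (extf s) i) ∧
    (∀ i, j < i → i + p ≤ k+1 → Nv p (extf s) j ≤ Nv p (extf s) i)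

lemma Aset_card (k p : ℕ) : (Aset k p).card ≤ 4 ^ (k+1-p) := by
  have h := Finset.card_le_card_of_injOn
    (f := fun s : Fin (k+1) → Fin 4 => fun r : Fin (k+1-p) => extf s (p + r.val))
    (s := Aset k p) (t := Finset.univ) (fun _ _ => Finset.mem_univ _) ?_
  · calc (Aset k p).card ≤ _ := h
    _ = 4 ^ (k+1-p) := by rw [Finset.card_univ]; simp
  · intro s hs s' hs' heq
    simp only [Aset, Finset.mem_coe, Finset.mem_filter] at hs hs'
    obtain ⟨-, j, hj1, hj2, hj3, hj4, hj5⟩ := hs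
    obtain ⟨-, j', hj1', hj2', hj3', hj4', hj5'⟩ := hs'
    have hag : ∀ x, p ≤ x → x < k+1 → extf s x = extf s' x := by
      intro x hx1 hx2
      have := congrFun heq ⟨x - p, by omega⟩
      simp only at this
      rw [show p + (x - p) = x by omega] at this
      exact this
    have wveq : ∀ i, p ≤ i → i + p ≤ k+1 → Nv p (extf s) i = Nv p (extf s') i := by
      intro i h1 h2
      exact Nv_congr fun t ht => hag (i + t) (by omega) (by omega)
    have hjj : j = j' := by
      rcases Nat.lt_trichotomy j j' with hlt | he | hgt
      · have l1 : Nv p (extf s') j ≤ Nv p (extf s') j' := by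
          rw [← wveq j hj1 hj2, ← wveq j' (by omega) hj2']
          exact hj5 j' hlt hj2'
        have l2 : Nv p (extf s') j' < Nv p (extf s') j := hj4' j hj1 hlt
        omega
      · exact he
      · have l1 : Nv p (extf s') j' ≤ Nv p (extf s') j := hj5' j hgt hj2
        have l2 : Nv p (extf s') j < Nv p (extf s') j' := by
          rw [← wveq j hj1 hj2, ← wveq j' (by omega) hj2']
          exact hj4 j' hj1' hgt
        omega
    subst hjj
    funext x
    by_cases hcase : x.val < p
    · have e1 : extf s x.val = extf s' x.val := by
        rw [hj3 x.val hcase, hj3' x.val hcase]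
        exact hag (j + x.val) (by omega) (by omega)
      rw [extf_eq s x.isLt, extf_eq s' x.isLt] at e1
      simpa using e1
    · have e1 := hag x.val (by omega) x.isLt
      rw [extf_eq s x.isLt, extf_eq s' x.isLt] at e1
      simpa using e1

noncomputable def Aset' (k p : ℕ) : Finset (Fin (k+1) → Fin 4) :=
  Finset.univ.filter fun s => ∃ j, j + p + p ≤ k+1 ∧
    (∀ t < p, extf s ((k+1-p) + t) = extf s (j + t)) ∧
    (∀ i, j < i → i + p + p ≤ k+1 → Nv p (extf s) j < Nv p (extf s) i) ∧
    (∀ i, i < j → Nv p (extf s) j ≤ Nv p (extf s) i)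

lemma Aset'_card (k p : ℕ) : (Aset' k p).card ≤ 4 ^ (k+1-p) := by
  have h := Finset.card_le_card_of_injOn
    (f := fun s : Fin (k+1) → Fin 4 => fun r : Fin (k+1-p) => extf s r.val)
    (s := Aset' k p) (t := Finset.univ) (fun _ _ => Finset.mem_univ _) ?_
  · calc (Aset' k p).card ≤ _ := h
    _ = 4 ^ (k+1-p) := by rw [Finset.card_univ]; simp
  · intro s hs s' hs' heq
    simp only [Aset', Finset.mem_coe, Finset.mem_filter] at hs hs'
    obtain ⟨-, j, hj2, hj3, hj4, hj5⟩ := hs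
    obtain ⟨-, j', hj2', hj3', hj4', hj5'⟩ := hs'
    have hag : ∀ x, x < k+1-p → extf s x = extf s' x := by
      intro x hx
      have := congrFun heq ⟨x, by omega⟩
      simpa using this
    have wveq : ∀ i, i + p + p ≤ k+1 → Nv p (extf s) i = Nv p (extf s') i := by
      intro i h2
      exact Nv_congr fun t ht => hag (i + t) (by omega)
    have hjj : j = j' := by
      rcases Nat.lt_trichotomy j j' with hlt | he | hgt
      · have l1 : Nv p (extf s') j < Nv p (extf s') j' := by
          rw [← wveq j hj2, ← wveq j' hj2']
          exact hj4 j' hlt hj2'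
        have l2 : Nv p (extf s') j' ≤ Nv p (extf s') j := hj5' j hlt
        omega
      · exact he
      · have l1 : Nv p (extf s') j' < Nv p (extf s') j := hj4' j hgt hj2
        have l2 : Nv p (extf s') j ≤ Nv p (extf s') j' := by
          rw [← wveq j hj2, ← wveq j' hj2']
          exact hj5 j' hgt
        omega
    subst hjj
    funext x
    by_cases hcase : x.val < k+1-p
    · have e1 := hag x.val hcase
      rw [extf_eq s x.isLt, extf_eq s' x.isLt] at e1
      simpa using e1
    · have hxv : x.val = (k+1-p) + (x.val - (k+1-p)) := by omega
      have htp : x.val - (k+1-p) < p := by have := x.isLt; omega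
      have e1 : extf s x.val = extf s' x.val := by
        rw [hxv, hj3 _ htp, hj3' _ htp]
        exact hag (j + (x.val - (k+1-p))) (by omega)
      rw [extf_eq s x.isLt, extf_eq s' x.isLt] at e1
      simpa using e1

/-! ### Cover lemmas -/

lemma TF_cover {k p : ℕ} (hp : 0 < p) (s : Fin (k+1) → Fin 4)
    (hA1 : ∀ j, j + p ≤ k+1 → Nv p (extf s) 0 ≤ Nv p (extf s) j)
    (htie : ∃ j, 0 < j ∧ j + p ≤ k+1 ∧ Nv p (extf s) j = Nv p (extf s) 0) :
    s ∈ Aset k p ∨ ∃ d, 1 ≤ d ∧ d ≤ p - 1 ∧ s ∈ PerSet k p d := by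
  classical
  have hspec := Nat.find_spec htie
  set j0 := Nat.find htie with hj0def
  obtain ⟨hj0pos, hj0v, hj0eq⟩ := hspec
  have hmin : ∀ j, j < j0 → ¬(0 < j ∧ j + p ≤ k+1 ∧ Nv p (extf s) j = Nv p (extf s) 0) :=
    fun j hj => Nat.find_min htie hj
  have hpw : ∀ t, t < p → extf s t = extf s (j0 + t) := by
    intro t ht
    have := Nv_eq_pointwise hj0eq.symm t ht
    simpa using this
  by_cases hcase : p ≤ j0
  · left
    simp only [Aset, Finset.mem_filter]
    refine ⟨Finset.mem_univ _, j0, hcase, hj0v, hpw, ?_, ?_⟩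
    · intro i hpi hij
      have hvalid : i + p ≤ k + 1 := by omega
      have hle : Nv p (extf s) 0 ≤ Nv p (extf s) i := hA1 i hvalid
      have hne := hmin i hij
      push_neg at hne
      have := hne (by omega) hvalid
      omega
    · intro i hji hvalid
      have := hA1 i hvalid
      omega
  · right
    push_neg at hcase
    refine ⟨j0, by omega, by omega, ?_⟩
    simp only [PerSet, Finset.mem_filter]
    refine ⟨Finset.mem_univ _, hj0v, hpw, ?_⟩
    intro i hi0 hid
    have hvalid : i + p ≤ k + 1 := by omega
    have hle : Nv p (extf s) 0 ≤ Nv p (extf s) i := hA1 i hvalid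
    have hne := hmin i hid
    push_neg at hne
    have := hne hi0 hvalid
    omega

lemma TL_cover {k p : ℕ} (hp : 0 < p) (hpk : p ≤ k) (s : Fin (k+1) → Fin 4)
    (hA2 : ∀ j, j + p ≤ k+1 → Nv p (extf s) (k+1-p) ≤ Nv p (extf s) j)
    (htie : ∃ j, j < k+1-p ∧ Nv p (extf s) j = Nv p (extf s) (k+1-p)) :
    s ∈ Aset' k p ∨ ∃ d, 1 ≤ d ∧ d ≤ p - 1 ∧ s ∈ PerSet' k p d := by
  classical
  obtain ⟨j, hjm, hjeq⟩ := htie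
  set m := k + 1 - p with hm
  have hmp : m + p = k + 1 := by omega
  set P : ℕ → Prop := fun i => i < m ∧ Nv p (extf s) i = Nv p (extf s) m with hP
  haveI : DecidablePred P := Classical.decPred P
  set j0 := Nat.findGreatest P m with hj0def
  have hPj0 : P j0 := Nat.findGreatest_spec (le_of_lt hjm) ⟨hjm, hjeq⟩
  have hgr : ∀ i, j0 < i → i ≤ m → ¬ P i := fun i h1 h2 => Nat.findGreatest_is_greatest h1 h2
  obtain ⟨hj0m, hj0eq⟩ := hPj0
  have hpw : ∀ t, t < p → extf s (j0 + t) = extf s (m + t) :=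
    fun t ht => Nv_eq_pointwise hj0eq t ht
  by_cases hcase : j0 + p ≤ m
  · left
    simp only [Aset', Finset.mem_filter]
    refine ⟨Finset.mem_univ _, j0, by omega, fun t ht => (hpw t ht).symm, ?_, ?_⟩
    · intro i hji hvalid2
      have hvalid : i + p ≤ k + 1 := by omega
      have hle : Nv p (extf s) m ≤ Nv p (extf s) i := hA2 i hvalid
      have him : i < m := by omega
      have hni := hgr i hji (by omega)
      simp only [hP, not_and] at hni
      have := hni him
      omega
    · intro i hij
      have hvalid : i + p ≤ k + 1 := by omega
      have := hA2 i hvalid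
      omega
  · right
    push_neg at hcase
    set d := m - j0 with hd
    have hd0 : 0 < d := by omega
    have hdp : d < p := by omega
    have hq : k + 1 - p - d = j0 := by omega
    refine ⟨d, by omega, by omega, ?_⟩
    simp only [PerSet', Finset.mem_filter]
    refine ⟨Finset.mem_univ _, by omega, ?_, ?_⟩
    · intro t ht
      rw [hq]
      rw [show j0 + d + t = m + t by omega]
      exact hpw t ht
    · intro i hi0 hid
      rw [hq]
      have hvalid : j0 + i + p ≤ k + 1 := by omega
      have hle : Nv p (extf s) m ≤ Nv p (extf s) (j0 + i) := hA2 _ hvalid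
      have hni := hgr (j0 + i) (by omega) (by omega)
      simp only [hP, not_and] at hni
      have := hni (by omega)
      have hmm : Nv p (extf s) (k+1-p) = Nv p (extf s) m := by rw [← hm]
      omega


/-! ### bridge for uniqueMinAt -/

lemma uniqueMinAt_iff {k p : ℕ} (s : Fin (k+1) → Fin 4) (i : ℕ) :
    uniqueMinAt (List.ofFn s) p i ↔
      (i + p ≤ k+1 ∧ ∀ j, j + p ≤ k+1 → j ≠ i → Nv p (extf s) i < Nv p (extf s) j) := by
  unfold uniqueMinAt
  rw [List.length_ofFn]
  constructor
  · rintro ⟨h1, h2⟩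
    refine ⟨h1, fun j hj hne => ?_⟩
    have := h2 j hj hne
    rw [show substr (List.ofFn s) i p = substr' (List.ofFn s) i p from rfl,
        show substr (List.ofFn s) j p = substr' (List.ofFn s) j p from rfl,
        substr'_ofFn s i p h1, substr'_ofFn s j p hj, lt_bridge] at this
    exact this
  · rintro ⟨h1, h2⟩
    refine ⟨h1, fun j hj hne => ?_⟩
    rw [show substr (List.ofFn s) i p = substr' (List.ofFn s) i p from rfl,
        show substr (List.ofFn s) j p = substr' (List.ofFn s) j p from rfl,
        substr'_ofFn s i p h1, substr'_ofFn s j p hj, lt_bridge]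
    exact h2 j hj hne

/-! ### the main sets -/

noncomputable def SminSet (k p : ℕ) : Finset (Fin (k+1) → Fin 4) :=
  Finset.univ.filter fun s =>
    uniqueMinAt (List.ofFn s) p 0 ∨ uniqueMinAt (List.ofFn s) p (k + 1 - p)

noncomputable def TFset (k p : ℕ) : Finset (Fin (k+1) → Fin 4) :=
  Finset.univ.filter fun s =>
    (∀ j, j + p ≤ k+1 → Nv p (extf s) 0 ≤ Nv p (extf s) j) ∧
    ∃ j, 0 < j ∧ j + p ≤ k+1 ∧ Nv p (extf s) j = Nv p (extf s) 0

noncomputable def TLset (k p : ℕ) : Finset (Fin (k+1) → Fin 4) :=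
  Finset.univ.filter fun s =>
    (∀ j, j + p ≤ k+1 → Nv p (extf s) (k+1-p) ≤ Nv p (extf s) j) ∧
    ∃ j, j < k+1-p ∧ Nv p (extf s) j = Nv p (extf s) (k+1-p)

noncomputable def StarSet (k p : ℕ) : Finset (Fin (k+1) → Fin 4) :=
  Finset.univ.filter fun s =>
    (∀ j, j + p ≤ k+1 → Nv p (extf s) 0 ≤ Nv p (extf s) j) ∨
    (∀ j, j + p ≤ k+1 → Nv p (extf s) (k+1-p) ≤ Nv p (extf s) j)

lemma star_subset {k p : ℕ} (hp : 0 < p) (hpk : p ≤ k) :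
    StarSet k p ⊆ SminSet k p ∪ TFset k p ∪ TLset k p := by
  intro s hs
  simp only [StarSet, Finset.mem_filter, Finset.mem_univ, true_and] at hs
  simp only [Finset.mem_union, SminSet, TFset, TLset, Finset.mem_filter, Finset.mem_univ, true_and]
  rcases hs with hA1 | hA2
  · by_cases htie : ∃ j, 0 < j ∧ j + p ≤ k+1 ∧ Nv p (extf s) j = Nv p (extf s) 0
    · exact Or.inl (Or.inr ⟨hA1, htie⟩)
    · push_neg at htie
      refine Or.inl (Or.inl (Or.inl ?_))
      rw [uniqueMinAt_iff]
      refine ⟨by omega, fun j hj hne => ?_⟩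
      have hle := hA1 j hj
      have := htie j (by omega) hj
      omega
  · by_cases htie : ∃ j, j < k+1-p ∧ Nv p (extf s) j = Nv p (extf s) (k+1-p)
    · exact Or.inr ⟨hA2, htie⟩
    · push_neg at htie
      refine Or.inl (Or.inl (Or.inr ?_))
      rw [uniqueMinAt_iff]
      refine ⟨by omega, fun j hj hne => ?_⟩
      have hle := hA2 j hj
      have := htie j (by omega)
      omega

lemma TF_subset {k p : ℕ} (hp : 0 < p) :
    TFset k p ⊆ Aset k p ∪ (Finset.Icc 1 (p-1)).biUnion (fun d => PerSet k p d) := by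
  intro s hs
  simp only [TFset, Finset.mem_filter, Finset.mem_univ, true_and] at hs
  rcases TF_cover hp s hs.1 hs.2 with h | ⟨d, hd1, hd2, hmem⟩
  · exact Finset.mem_union_left _ h
  · exact Finset.mem_union_right _ (Finset.mem_biUnion.mpr ⟨d, Finset.mem_Icc.mpr ⟨hd1, hd2⟩, hmem⟩)

lemma TL_subset {k p : ℕ} (hp : 0 < p) (hpk : p ≤ k) :
    TLset k p ⊆ Aset' k p ∪ (Finset.Icc 1 (p-1)).biUnion (fun d => PerSet' k p d) := by
  intro s hs
  simp only [TLset, Finset.mem_filter, Finset.mem_univ, true_and] at hs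
  rcases TL_cover hp hpk s hs.1 hs.2 with h | ⟨d, hd1, hd2, hmem⟩
  · exact Finset.mem_union_left _ h
  · exact Finset.mem_union_right _ (Finset.mem_biUnion.mpr ⟨d, Finset.mem_Icc.mpr ⟨hd1, hd2⟩, hmem⟩)

/-! ### numeric bounds -/

lemma PerSet_bound {k p d : ℕ} (hd : 1 ≤ d) (hdp : d ≤ p - 1) (hp : 0 < p) :
    (PerSet k p d).card * d ≤ 4 ^ (k+1-p) := by
  by_cases hdk : d + p ≤ k + 1
  · calc (PerSet k p d).card * d ≤ ((Wset p d).card * 4 ^ (k+1-p-d)) * d :=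
          Nat.mul_le_mul_right _ (PerSet_card (by omega) (by omega))
    _ = ((Wset p d).card * d) * 4 ^ (k+1-p-d) := by ring
    _ ≤ 4 ^ d * 4 ^ (k+1-p-d) := Nat.mul_le_mul_right _ (Wset_card (by omega) (by omega))
    _ = 4 ^ (k+1-p) := by rw [← pow_add]; congr 1; omega
  · have : PerSet k p d = ∅ := by
      ext s
      simp only [PerSet, Finset.mem_filter, Finset.notMem_empty, iff_false]
      rintro ⟨-, h, -⟩
      omega
    simp [this]

lemma PerSet'_bound {k p d : ℕ} (hd : 1 ≤ d) (hdp : d ≤ p - 1) (hp : 0 < p) :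
    (PerSet' k p d).card * d ≤ 4 ^ (k+1-p) := by
  by_cases hdk : d + p ≤ k + 1
  · calc (PerSet' k p d).card * d ≤ ((Wset p d).card * 4 ^ (k+1-p-d)) * d :=
          Nat.mul_le_mul_right _ (PerSet'_card (by omega) (by omega))
    _ = ((Wset p d).card * d) * 4 ^ (k+1-p-d) := by ring
    _ ≤ 4 ^ d * 4 ^ (k+1-p-d) := Nat.mul_le_mul_right _ (Wset_card (by omega) (by omega))
    _ = 4 ^ (k+1-p) := by rw [← pow_add]; congr 1; omega
  · have : PerSet' k p d = ∅ := by
      ext s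
      simp only [PerSet', Finset.mem_filter, Finset.notMem_empty, iff_false]
      rintro ⟨-, h, -⟩
      omega
    simp [this]

lemma harmonic_le : ∀ n : ℕ, ∑ d ∈ Finset.Icc 1 n, (1 : ℚ)/d ≤ (n+1)/2 := by
  intro n
  induction n with
  | zero => simp
  | succ n ih =>
    rw [Finset.sum_Icc_succ_top (by omega)]
    rcases Nat.eq_zero_or_pos n with rfl | hn
    · norm_num
    · have h1 : (1 : ℚ)/(n+1) ≤ 1/2 := by
        apply div_le_div_of_nonneg_left (by norm_num) (by norm_num)
        push_cast
        have : (1 : ℚ) ≤ (n : ℚ) := by exact_mod_cast hn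
        linarith
      push_cast at *
      linarith

lemma tie_bound {k p : ℕ} (hp : 0 < p) (hpk : p ≤ k) :
    ((TFset k p).card : ℚ) + ((TLset k p).card : ℚ)
      ≤ ((p : ℚ) + 2) * 4 ^ (k+1-p) := by
  have hTF : (TFset k p).card ≤ (Aset k p).card
      + ∑ d ∈ Finset.Icc 1 (p-1), (PerSet k p d).card := by
    calc (TFset k p).card
        ≤ (Aset k p ∪ (Finset.Icc 1 (p-1)).biUnion (fun d => PerSet k p d)).card :=
          Finset.card_le_card (TF_subset hp)
    _ ≤ (Aset k p).card + ((Finset.Icc 1 (p-1)).biUnion (fun d => PerSet k p d)).card :=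
          Finset.card_union_le _ _
    _ ≤ _ := by
          gcongr
          exact Finset.card_biUnion_le
  have hTL : (TLset k p).card ≤ (Aset' k p).card
      + ∑ d ∈ Finset.Icc 1 (p-1), (PerSet' k p d).card := by
    calc (TLset k p).card
        ≤ (Aset' k p ∪ (Finset.Icc 1 (p-1)).biUnion (fun d => PerSet' k p d)).card :=
          Finset.card_le_card (TL_subset hp hpk)
    _ ≤ (Aset' k p).card + ((Finset.Icc 1 (p-1)).biUnion (fun d => PerSet' k p d)).card :=
          Finset.card_union_le _ _
    _ ≤ _ := by
          gcongr
          exact Finset.card_biUnion_le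
  have hsum : ∀ (F : ℕ → ℕ), (∀ d, 1 ≤ d → d ≤ p - 1 → F d * d ≤ 4 ^ (k+1-p)) →
      (∑ d ∈ Finset.Icc 1 (p-1), (F d : ℚ)) ≤ (4:ℚ) ^ (k+1-p) * (p/2) := by
    intro F hF
    have step : ∀ d ∈ Finset.Icc 1 (p-1), (F d : ℚ) ≤ (4:ℚ)^(k+1-p) * (1/d) := by
      intro d hd
      rw [Finset.mem_Icc] at hd
      have hb := hF d hd.1 hd.2
      have hd0 : (0 : ℚ) < d := by exact_mod_cast hd.1
      rw [mul_one_div, le_div_iff₀ hd0]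
      exact_mod_cast hb
    calc (∑ d ∈ Finset.Icc 1 (p-1), (F d : ℚ)) ≤ ∑ d ∈ Finset.Icc 1 (p-1), (4:ℚ)^(k+1-p) * (1/d) :=
          Finset.sum_le_sum step
    _ = (4:ℚ)^(k+1-p) * ∑ d ∈ Finset.Icc 1 (p-1), (1:ℚ)/d := by rw [Finset.mul_sum]
    _ ≤ (4:ℚ)^(k+1-p) * (((p-1 : ℕ) + 1)/2) :=
          mul_le_mul_of_nonneg_left (harmonic_le (p-1)) (by positivity)
    _ = (4:ℚ)^(k+1-p) * (p/2) := by
          congr 1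
          have : ((p - 1 : ℕ) : ℚ) = (p : ℚ) - 1 := by
            have : (1:ℕ) ≤ p := hp
            push_cast [this]
            ring
          rw [this]
          ring
  have hA := Aset_card k p
  have hA' := Aset'_card k p
  have s1 := hsum (fun d => (PerSet k p d).card) (fun d h1 h2 => PerSet_bound h1 h2 hp)
  have s2 := hsum (fun d => (PerSet' k p d).card) (fun d h1 h2 => PerSet'_bound h1 h2 hp)
  have c1 : ((TFset k p).card : ℚ) ≤ ((Aset k p).card : ℚ)
      + ∑ d ∈ Finset.Icc 1 (p-1), ((PerSet k p d).card : ℚ) := by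
    push_cast [← Nat.cast_sum]
    exact_mod_cast hTF
  have c2 : ((TLset k p).card : ℚ) ≤ ((Aset' k p).card : ℚ)
      + ∑ d ∈ Finset.Icc 1 (p-1), ((PerSet' k p d).card : ℚ) := by
    push_cast [← Nat.cast_sum]
    exact_mod_cast hTL
  have d1 : ((Aset k p).card : ℚ) ≤ (4:ℚ)^(k+1-p) := by exact_mod_cast hA
  have d2 : ((Aset' k p).card : ℚ) ≤ (4:ℚ)^(k+1-p) := by exact_mod_cast hA'
  have hpow : (0:ℚ) ≤ (4:ℚ)^(k+1-p) := by positivity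
  calc ((TFset k p).card : ℚ) + ((TLset k p).card : ℚ)
      ≤ ((4:ℚ)^(k+1-p) + (4:ℚ)^(k+1-p) * (p/2)) + ((4:ℚ)^(k+1-p) + (4:ℚ)^(k+1-p) * (p/2)) := by
        have := le_trans c1 (by linarith : ((Aset k p).card : ℚ)
          + ∑ d ∈ Finset.Icc 1 (p-1), ((PerSet k p d).card : ℚ)
          ≤ (4:ℚ)^(k+1-p) + (4:ℚ)^(k+1-p) * (p/2))
        have := le_trans c2 (by linarith : ((Aset' k p).card : ℚ)
          + ∑ d ∈ Finset.Icc 1 (p-1), ((PerSet' k p d).card : ℚ)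
          ≤ (4:ℚ)^(k+1-p) + (4:ℚ)^(k+1-p) * (p/2))
        linarith
  _ = ((p : ℚ) + 2) * 4 ^ (k+1-p) := by ring

/-! ### projection from the long strings -/

lemma big_card_le {k p a : ℕ} (hp : 0 < p) (hpk : p ≤ k) (ha : 0 < a) :
    (Finset.univ.filter fun s : Fin (k + a + 1) → Fin 4 =>
      uniqueMinAt (List.ofFn s) (p + a) 0 ∨
      uniqueMinAt (List.ofFn s) (p + a) (k + a + 1 - (p + a))).card
    ≤ (StarSet k p).card * 4 ^ a := by
  have h := Finset.card_le_card_of_injOn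
    (f := fun s : Fin (k + a + 1) → Fin 4 =>
      ((fun i : Fin (k+1) => s ⟨i.val, by omega⟩ : Fin (k+1) → Fin 4),
       (fun r : Fin a => s ⟨k + 1 + r.val, by omega⟩ : Fin a → Fin 4)))
    (s := Finset.univ.filter fun s : Fin (k + a + 1) → Fin 4 =>
      uniqueMinAt (List.ofFn s) (p + a) 0 ∨
      uniqueMinAt (List.ofFn s) (p + a) (k + a + 1 - (p + a)))
    (t := (StarSet k p) ×ˢ (Finset.univ : Finset (Fin a → Fin 4))) ?_ ?_
  · calc _ ≤ _ := h
    _ = (StarSet k p).card * 4 ^ a := by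
        rw [Finset.card_product, Finset.card_univ]
        congr 1
        simp
  · intro s hs
    simp only [Finset.mem_coe, Finset.mem_filter, Finset.mem_univ, true_and] at hs
    rw [Finset.mem_coe, Finset.mem_product]
    refine ⟨?_, Finset.mem_univ _⟩
    simp only [StarSet, Finset.mem_filter, Finset.mem_univ, true_and]
    have htr : ∀ j, j + p ≤ k + 1 →
        Nv p (extf (fun i : Fin (k+1) => s ⟨i.val, by omega⟩)) j = Nv p (extf s) j := by
      intro j hj
      refine Nv_congr fun t ht => ?_
      rw [extf_eq _ (show j + t < k + 1 by omega), extf_eq _ (show j + t < k + a + 1 by omega)]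
    rcases hs with hfirst | hlast
    · left
      rw [uniqueMinAt_iff (k := k + a)] at hfirst
      obtain ⟨-, hbig⟩ := hfirst
      intro j hj
      by_cases hj0 : j = 0
      · subst hj0; exact le_refl _
      · have hstrict := hbig j (by omega) hj0
        have hle : Nv p (extf s) 0 ≤ Nv p (extf s) j := Nv_prefix_le hstrict
        rw [htr 0 (by omega), htr j hj]
        exact hle
    · right
      rw [uniqueMinAt_iff (k := k + a)] at hlast
      obtain ⟨-, hbig⟩ := hlast
      have he : k + a + 1 - (p + a) = k + 1 - p := by omega
      rw [he] at hbig
      intro j hj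
      by_cases hj0 : j = k + 1 - p
      · subst hj0; exact le_refl _
      · have hstrict := hbig j (by omega) hj0
        have hle : Nv p (extf s) (k+1-p) ≤ Nv p (extf s) j := Nv_prefix_le hstrict
        rw [htr (k+1-p) (by omega), htr j hj]
        exact hle
  · intro s hs s' hs' heq
    have hw := congrArg Prod.fst heq
    have hr := congrArg Prod.snd heq
    simp only at hw hr
    funext x
    by_cases hcase : x.val < k + 1
    · have := congrFun hw ⟨x.val, hcase⟩
      simp only at this
      have ex : (⟨x.val, by omega⟩ : Fin (k + a + 1)) = x := Fin.ext rfl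
      rwa [ex] at this
    · have hlt : x.val - (k+1) < a := by have := x.isLt; omega
      have := congrFun hr ⟨x.val - (k+1), hlt⟩
      simp only at this
      have ex : (⟨k + 1 + (x.val - (k+1)), by omega⟩ : Fin (k + a + 1)) = x :=
        Fin.ext (by simp; omega)
      rwa [ex] at this

/-- for any integer `a > 0`, `P₁(k+a, p+a) ≤ 2·P₁(k,p) + (p+2)/4^p`. -/
theorem stmt4 (k p a : ℕ) (hp : 0 < p) (hpk : p ≤ k) (ha : 0 < a) :
    P1 (k + a) (p + a) ≤ 2 * P1 k p + ((p : ℚ) + 2) / 4 ^ p := by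
  have hb := big_card_le (k := k) (p := p) (a := a) hp hpk ha
  have hstar : (StarSet k p).card ≤ (SminSet k p).card
      + ((TFset k p).card + (TLset k p).card) := by
    calc (StarSet k p).card ≤ (SminSet k p ∪ TFset k p ∪ TLset k p).card :=
          Finset.card_le_card (star_subset hp hpk)
    _ ≤ (SminSet k p ∪ TFset k p).card + (TLset k p).card := Finset.card_union_le _ _
    _ ≤ (SminSet k p).card + (TFset k p).card + (TLset k p).card := by
          have := Finset.card_union_le (SminSet k p) (TFset k p)
          omega
    _ = _ := by omega
  have htie := tie_bound (k := k) hp hpk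
  -- pass to rationals
  have hP1big : P1 (k + a) (p + a) =
      ((Finset.univ.filter fun s : Fin (k + a + 1) → Fin 4 =>
        uniqueMinAt (List.ofFn s) (p + a) 0 ∨
        uniqueMinAt (List.ofFn s) (p + a) (k + a + 1 - (p + a))).card : ℚ) / 4 ^ (k + a + 1) := rfl
  have hP1small : P1 k p = ((SminSet k p).card : ℚ) / 4 ^ (k + 1) := rfl
  have hpow_pos : (0:ℚ) < 4 ^ (k + a + 1) := by positivity
  have hpow_pos2 : (0:ℚ) < 4 ^ (k + 1) := by positivity
  have hpowa : (0:ℚ) < 4 ^ a := by positivity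
  have key : P1 (k + a) (p + a) ≤ ((StarSet k p).card : ℚ) / 4 ^ (k+1) := by
    rw [hP1big]
    have hnum : ((Finset.univ.filter fun s : Fin (k + a + 1) → Fin 4 =>
        uniqueMinAt (List.ofFn s) (p + a) 0 ∨
        uniqueMinAt (List.ofFn s) (p + a) (k + a + 1 - (p + a))).card : ℚ)
        ≤ ((StarSet k p).card : ℚ) * 4 ^ a := by exact_mod_cast hb
    have hsplit : (4:ℚ) ^ (k + a + 1) = 4 ^ (k+1) * 4 ^ a := by
      rw [← pow_add]; congr 1; omega
    calc _ ≤ (((StarSet k p).card : ℚ) * 4 ^ a) / 4 ^ (k + a + 1) := by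
          gcongr
    _ = ((StarSet k p).card : ℚ) / 4 ^ (k+1) := by
          rw [hsplit, mul_div_mul_right _ _ (ne_of_gt hpowa)]
  have hstarQ : ((StarSet k p).card : ℚ) ≤ ((SminSet k p).card : ℚ)
      + (((p : ℚ) + 2) * 4 ^ (k+1-p)) := by
    have h1 : ((StarSet k p).card : ℚ) ≤ ((SminSet k p).card : ℚ)
        + (((TFset k p).card : ℚ) + ((TLset k p).card : ℚ)) := by exact_mod_cast hstar
    linarith
  have hfrac : (((p : ℚ) + 2) * 4 ^ (k+1-p)) / 4 ^ (k+1) = ((p : ℚ) + 2) / 4 ^ p := by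
    have hsplit : (4:ℚ) ^ (k + 1) = 4 ^ (k+1-p) * 4 ^ p := by
      rw [← pow_add]; congr 1; omega
    rw [hsplit]
    rw [div_eq_div_iff (by positivity) (by positivity)]
    ring
  have hP1nonneg : 0 ≤ P1 k p := by
    rw [hP1small]
    positivity
  calc P1 (k + a) (p + a) ≤ ((StarSet k p).card : ℚ) / 4 ^ (k+1) := key
  _ ≤ (((SminSet k p).card : ℚ) + (((p : ℚ) + 2) * 4 ^ (k+1-p))) / 4 ^ (k+1) :=
        by gcongr
  _ = P1 k p + (((p : ℚ) + 2) * 4 ^ (k+1-p)) / 4 ^ (k+1) := by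
        rw [add_div, hP1small]
  _ = P1 k p + ((p : ℚ) + 2) / 4 ^ p := by rw [hfrac]
  _ ≤ 2 * P1 k p + ((p : ℚ) + 2) / 4 ^ p := by linarith
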